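/- Let p be a probability distribution on n states with values sorted nonincreasingly, and let G′ be the sequence defined recursively by G′(i) = max_{1≤j≤n} (∑_{k=1}^{j} p(k) − ∑_{k=1}^{i−1} G′(k)) / j. If a distribution C couples MajorizingSet(p), then C ≼ G′, i.e., ∑_{k=1}^{i} C(k) ≤ ∑_{k=1}^{i} G′(k) for every i (with C's values sorted nonincreasingly). -/

import Mathlib

open Finset Real

/-- `q` is a member of `MajorizingSet p`: a sorted distribution on `n` states
whose prefix sums dominate those of `p` (i.e. `p ≼ q`). -/
def MajMem {n : ℕ} (p q : Fin n → ℝ) : Prop :=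
  Antitone q ∧ (∀ k, 0 ≤ q k) ∧ (∑ k, q k = 1) ∧
    ∀ i : Fin n, ∑ j ∈ Finset.Iic i, p j ≤ ∑ j ∈ Finset.Iic i, q j

/-- The distribution `C` couples the distribution `q` on `n` states. -/
def Couples {n : ℕ} (C : ℕ → ℝ) (q : Fin n → ℝ) : Prop :=
  ∃ f : ℕ → Fin n, ∀ i : Fin n, ∑' j : {j : ℕ // f j = i}, C j.1 = q i


lemma aux_min_diff_anti {x s t : ℝ} (hx : 0 ≤ x) (hst : s ≤ t) :
    min (t + x) 1 - min t 1 ≤ min (s + x) 1 - min s 1 := by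
  simp only [min_def]; split_ifs <;> linarith

lemma aux_min_diff_le {x a : ℝ} (hx : 0 ≤ x) : min (a + x) 1 - min a 1 ≤ x := by
  simp only [min_def]; split_ifs <;> linarith

lemma aux_nat_Iic (mm : ℕ) : Finset.Iic mm = Finset.range (mm + 1) := by
  ext a; simp [Nat.lt_succ_iff]

set_option maxHeartbeats 1000000 in
/-- **Lemma 1.**  Let `p` be a sorted distribution on `n` states and `G'` satisfy the
recursion `G' i = max_{1≤j≤n} (∑_{k=1}^{j} p k − ∑_{k<i} G' k)/j`.  If a (sorted)
distribution `C` couples every member of `MajorizingSet p`, then `C ≼ G'`: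
every prefix sum of `C` is at most the corresponding prefix sum of `G'`. -/
theorem coupling_of_majorizing_set_is_majorized
    (n : ℕ) [NeZero n] (p : Fin n → ℝ)
    (hsort : Antitone p) (hpos : ∀ k, 0 ≤ p k) (hsum : ∑ k, p k = 1)
    (G' : ℕ → ℝ)
    (hG' : ∀ i, G' i = univ.sup' univ_nonempty fun j : Fin n =>
      ((∑ k ∈ Iic j, p k) - ∑ k ∈ Finset.range i, G' k) / ((j : ℝ) + 1))
    (C : ℕ → ℝ)
    (hCsort : Antitone C) (hCpos : ∀ j, 0 ≤ C j) (hCsum : HasSum C 1)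
    (hCcouples : ∀ q : Fin n → ℝ, MajMem p q → Couples C q) :
    ∀ i : ℕ, ∑ k ∈ Finset.range i, C k ≤ ∑ k ∈ Finset.range i, G' k := by
  obtain ⟨m, rfl⟩ : ∃ m, n = m + 1 := ⟨n - 1, (Nat.succ_pred_eq_of_pos (NeZero.pos n)).symm⟩
  have hCsummable : Summable C := hCsum.summable
  have hTle : ∀ i : ℕ, ∑ k ∈ Finset.range i, C k ≤ 1 := by
    intro i
    calc ∑ k ∈ Finset.range i, C k ≤ ∑' k, C k :=
          Summable.sum_le_tsum _ (fun _ _ => hCpos _) hCsummable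
      _ = 1 := hCsum.tsum_eq
  have hT0 : ∀ i : ℕ, 0 ≤ ∑ k ∈ Finset.range i, C k :=
    fun i => Finset.sum_nonneg fun _ _ => hCpos _
  have hIiclast : Finset.Iic (Fin.last m) = (Finset.univ : Finset (Fin (m+1))) := by
    ext a; simp [Fin.le_last]
  have hPle1 : ∀ j : Fin (m+1), ∑ k ∈ Iic j, p k ≤ 1 := by
    intro j
    calc ∑ k ∈ Iic j, p k ≤ ∑ k, p k :=
          Finset.sum_le_sum_of_subset_of_nonneg (Finset.subset_univ _)
            (fun k _ _ => hpos k)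
      _ = 1 := hsum
  have hPlast : ∑ k ∈ Iic (Fin.last m), p k = 1 := by rw [hIiclast]; exact hsum
  -- Key claim (★)
  have star : ∀ i : ℕ, ∃ j : Fin (m+1),
      (∑ k ∈ Finset.range i, C k) + ((j : ℝ) + 1) * C i ≤ ∑ k ∈ Iic j, p k := by
    intro i
    by_contra hcon
    push_neg at hcon
    set T := ∑ k ∈ Finset.range i, C k with hT
    set c := C i with hc
    have hc0 : 0 ≤ c := hCpos i
    have hTc1 : T + c ≤ 1 := by
      have := hTle (i+1); rwa [Finset.sum_range_succ] at this
    have hcpos : 0 < c := by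
      rcases lt_or_eq_of_le hc0 with h | h
      · exact h
      · exfalso
        have := hcon (Fin.last m)
        rw [hPlast, ← h] at this
        have := hTle i
        nlinarith
    -- minimum slack
    set ε := (Finset.univ : Finset (Fin (m+1))).inf' univ_nonempty
        (fun j => T + ((j : ℝ) + 1) * c - ∑ k ∈ Iic j, p k) with hε
    have hεpos : 0 < ε := by
      rw [hε, Finset.lt_inf'_iff]
      intro j _
      have := hcon j
      linarith
    have hεle : ∀ j : Fin (m+1), ε ≤ T + ((j : ℝ) + 1) * c - ∑ k ∈ Iic j, p k :=
      fun j => Finset.inf'_le _ (Finset.mem_univ j)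
    set δ := min (ε / (m + 1)) c / 2 with hδ
    have hm1pos : (0:ℝ) < (m:ℝ) + 1 := by positivity
    have hδpos : 0 < δ := by
      rw [hδ]; positivity
    have hδc : δ < c := by
      rw [hδ]
      have : min (ε / (m+1)) c ≤ c := min_le_right _ _
      linarith
    have hδε : ((m:ℝ) + 1) * δ ≤ ε := by
      rw [hδ]
      have h1 : min (ε / (m+1)) c ≤ ε / (m+1) := min_le_left _ _
      have h2 : ((m:ℝ)+1) * (ε / (m+1)) = ε := by field_simp
      nlinarith
    set x := c - δ with hx
    have hx0 : 0 < x := by rw [hx]; linarith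
    set R : ℕ → ℝ := fun k => if k = 0 then 0 else min (T + k * x) 1 with hR
    set q : Fin (m+1) → ℝ := fun j => R (j.1 + 1) - R j.1 with hq
    have hR0 : R 0 = 0 := by simp [hR]
    have hRs : ∀ k : ℕ, R (k + 1) = min (T + (k + 1 : ℕ) * x) 1 := by
      intro k; simp [hR]
    have hR1 : R 1 = T + x := by
      rw [show (1:ℕ) = 0 + 1 from rfl, hRs 0]
      push_cast
      rw [min_eq_left]; ring_nf; linarith
    have hRstep : ∀ k : ℕ, R k ≤ R (k + 1) := by
      intro k
      cases k with
      | zero =>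
        rw [hR0, hR1]; linarith [hT0 i]
      | succ l =>
        rw [hRs l, hRs (l+1)]
        apply min_le_min _ le_rfl
        push_cast; nlinarith
    have hRmono : Monotone R := monotone_nat_of_le_succ hRstep
    have hRdiff_le : ∀ k : ℕ, k ≠ 0 → R (k + 1) - R k ≤ x := by
      intro k hk
      obtain ⟨l, rfl⟩ := Nat.exists_eq_succ_of_ne_zero hk
      rw [hRs l, hRs (l+1)]
      have := aux_min_diff_le (a := T + ((l:ℝ)+1) * x) (le_of_lt hx0)
      push_cast
      push_cast at this
      rw [show T + ((l:ℝ)+1+1) * x = T + ((l:ℝ)+1) * x + x by ring]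
      exact this
    -- prefix sums of q
    have hQ : ∀ j : Fin (m+1), ∑ k ∈ Iic j, q k = R (j.1 + 1) := by
      intro j
      have h1 : ∑ k ∈ Iic j, q k
          = ∑ k ∈ (Iic j).map Fin.valEmbedding, (R (k + 1) - R k) := by
        rw [Finset.sum_map]; rfl
      rw [h1, Fin.map_valEmbedding_Iic, aux_nat_Iic, Finset.sum_range_sub R, hR0,
        sub_zero]
    have hq0 : ∀ k, 0 ≤ q k := fun k => sub_nonneg.mpr (hRstep k.1)
    have hRlast : R (m + 1) = 1 := by
      rw [hRs m]
      apply min_eq_right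
      have h1 := hεle (Fin.last m)
      rw [hPlast] at h1
      simp only [Fin.val_last] at h1 ⊢
      push_cast
      nlinarith
    have hqsum : ∑ k, q k = 1 := by
      rw [← hIiclast, hQ (Fin.last m)]
      simp [hRlast]
    have hmaj : ∀ j : Fin (m+1), ∑ k ∈ Iic j, p k ≤ ∑ k ∈ Iic j, q k := by
      intro j
      rw [hQ j, hRs j.1]
      apply le_min _ (hPle1 j)
      have h1 := hεle j
      have h2 : ((j:ℝ) + 1) * δ ≤ ε := by
        have : (j:ℝ) + 1 ≤ (m:ℝ) + 1 := by
          have := Fin.is_le j; push_cast; exact_mod_cast by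
            exact_mod_cast add_le_add_left (by exact_mod_cast this : (j:ℝ) ≤ m) 1
        nlinarith
      push_cast
      nlinarith
    have hqsort : Antitone q := by
      intro a b hab
      rcases Nat.eq_zero_or_eq_succ_pred b.1 with hb0 | hbs
      · have : a = b := le_antisymm hab (by
          have : a.1 = 0 := Nat.le_zero.mp (hb0 ▸ hab)
          exact Fin.le_def.mpr (by omega))
        rw [this]
      · set bb := b.1 - 1 with hbb
        have hb1 : b.1 = bb + 1 := hbs
        have hqb_le : q b ≤ x := by
          rw [hq]; exact hRdiff_le b.1 (by omega)
        rcases Nat.eq_zero_or_eq_succ_pred a.1 with ha0 | has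
        · have hqa : q a = T + x := by
            simp only [hq, ha0, hR0, hR1, sub_zero]
          rw [hqa]
          have := hT0 i
          linarith
        · set aa := a.1 - 1 with haa
          have ha1 : a.1 = aa + 1 := has
          have hab' : (aa:ℝ) + 1 ≤ (bb:ℝ) + 1 := by
            have : a.1 ≤ b.1 := hab
            have : aa ≤ bb := by omega
            push_cast; linarith [(by exact_mod_cast this : (aa:ℝ) ≤ bb)]
          have key := aux_min_diff_anti (x := x)
            (s := T + ((aa:ℝ)+1) * x) (t := T + ((bb:ℝ)+1) * x)
            (le_of_lt hx0) (by nlinarith)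
          simp only [hq, hb1, ha1, hRs]
          push_cast
          have e1 : T + ((bb:ℝ) + 1 + 1) * x = (T + ((bb:ℝ)+1) * x) + x := by ring
          have e2 : T + ((aa:ℝ) + 1 + 1) * x = (T + ((aa:ℝ)+1) * x) + x := by ring
          rw [e1, e2]
          exact key
    obtain ⟨f, hf⟩ := hCcouples q ⟨hqsort, hq0, hqsum, hmaj⟩
    have hfiber : ∀ k : ℕ, C k ≤ q (f k) := by
      intro k
      rw [← hf (f k)]
      exact Summable.le_tsum (hCsummable.subtype _) (⟨k, rfl⟩ : {j : ℕ // f j = f k})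
        (fun b _ => hCpos _)
    have hfk0 : ∀ k : ℕ, k ≤ i → f k = 0 := by
      intro k hk
      by_contra hne
      have hk1 : (f k).1 ≠ 0 := fun h => hne (Fin.ext h)
      have h1 : q (f k) ≤ x := hRdiff_le (f k).1 hk1
      have h2 : c ≤ C k := hCsort hk
      have := hfiber k
      rw [hx] at h1
      linarith
    have hfinal : T + c ≤ q 0 := by
      have hs : ∑ k ∈ Finset.range (i+1), C k
          = ∑ j ∈ (Finset.range (i+1)).subtype (fun j => f j = 0), C j.1 := by
        rw [Finset.sum_subtype_eq_sum_filter]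
        rw [Finset.filter_true_of_mem]
        intro k hk
        exact hfk0 k (Nat.lt_succ_iff.mp (Finset.mem_range.mp hk))
      have hle : ∑ j ∈ (Finset.range (i+1)).subtype (fun j => f j = 0), C j.1
          ≤ ∑' j : {j : ℕ // f j = 0}, C j.1 :=
        Summable.sum_le_tsum _ (fun b _ => hCpos _) (hCsummable.subtype _)
      rw [hf 0] at hle
      calc T + c = ∑ k ∈ Finset.range (i+1), C k := by
            rw [Finset.sum_range_succ, hT, hc]
        _ ≤ q 0 := by rw [hs]; exact hle
    have hq0val : q 0 = T + x := by
      have h0 : ((0 : Fin (m+1)) : ℕ) = 0 := Fin.val_zero _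
      simp only [hq, h0, hR0, hR1, sub_zero]
    rw [hq0val, hx] at hfinal
    linarith
  -- main induction
  intro i
  induction i with
  | zero => simp
  | succ i ih =>
    obtain ⟨j, hj⟩ := star i
    rw [Finset.sum_range_succ, Finset.sum_range_succ]
    have hj1 : (0:ℝ) < (j:ℝ) + 1 := by positivity
    have hGi : ((∑ k ∈ Iic j, p k) - ∑ k ∈ Finset.range i, G' k) / ((j:ℝ) + 1) ≤ G' i := by
      rw [hG' i]
      exact Finset.le_sup'
        (fun j : Fin (m+1) => ((∑ k ∈ Iic j, p k) - ∑ k ∈ Finset.range i, G' k) / ((j:ℝ) + 1))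
        (Finset.mem_univ j)
    have h2 : (∑ k ∈ Iic j, p k) - ∑ k ∈ Finset.range i, G' k ≤ G' i * ((j:ℝ) + 1) :=
      (div_le_iff₀ hj1).mp hGi
    have hj0 : (0:ℝ) ≤ (j:ℝ) := Nat.cast_nonneg _
    nlinarith [mul_nonneg hj0 (sub_nonneg.mpr ih)]
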